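/- arXiv:1307.6917 — 2 statements merged into one kernel-verified Lean document; each statement's English description precedes it below -/
import Mathlib

section
/- Let α > 0 and T > 0. Let g : ℝ → ℂ be twice continuously differentiable with g(z) → 0 and g'(z) → 0 as z → ±∞, and suppose the integrals ∫_ℝ |g'(z)| dz and ∫_ℝ (ln(e^α + |z|/2))^α |g^{(i)}(z)| dz for i = 0, 1, 2 are all finite. Define φ(t) = (1/2π) ∫_ℝ e^{itz} g(z) dz and φ_{0k}(t) = φ(t − k) for k ∈ ℤ. Then there exists a constant B > 0 (depending only on g, α, T) such that for every integer k ≠ 0 and all t, s ∈ [0,T] with t ≠ s, |φ_{0k}(t) − φ_{0k}(s)| ≤ B / (k² · (ln(e^α + 1/|t − s|))^α). -/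
open MeasureTheory Filter

section Aux

lemma exp_I_sub_one_norm (x : ℝ) : ‖Complex.exp (x * Complex.I) - 1‖ ≤ |x| := by
  have h : Complex.exp (x * Complex.I) - 1
      = Complex.exp ((x/2 : ℝ) * Complex.I) * (2 * Complex.I * Complex.sin ((x/2 : ℝ))) := by
    rw [Complex.sin]
    have e1 : Complex.exp ((x:ℂ) * Complex.I)
        = Complex.exp ((x/2 : ℝ) * Complex.I) * Complex.exp ((x/2 : ℝ) * Complex.I) := by
      rw [← Complex.exp_add]; push_cast; ring_nf
    have e2 : (1 : ℂ) = Complex.exp ((x/2 : ℝ) * Complex.I) * Complex.exp (-((x/2 : ℝ)) * Complex.I) := by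
      rw [← Complex.exp_add]; push_cast; ring_nf; rw [Complex.exp_zero]
    rw [e1]; nth_rewrite 1 [e2]
    have : ((-(x/2 : ℝ) : ℝ) : ℂ) = -((x/2:ℝ) : ℂ) := by push_cast; ring
    rw [show Complex.exp (-(((x/2:ℝ)):ℂ) * Complex.I) = Complex.exp ((-(x/2:ℝ) : ℝ) * Complex.I) by rw [this]] at *
    ring_nf
    rw [Complex.I_sq]
    push_cast
    ring_nf
  rw [h, norm_mul]
  rw [Complex.norm_exp_ofReal_mul_I, one_mul]
  rw [← Complex.ofReal_sin]
  simp only [norm_mul, Complex.norm_real, Complex.norm_I, mul_one, Real.norm_eq_abs]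
  have := Real.abs_sin_le_abs (x := x/2)
  rw [abs_div] at this
  norm_num at this ⊢
  linarith

lemma w_ge (α : ℝ) {z : ℝ} (hz : 0 ≤ z) :
    α ≤ Real.log (Real.exp α + z / 2) := by
  calc α = Real.log (Real.exp α) := (Real.log_exp α).symm
    _ ≤ Real.log (Real.exp α + z / 2) := by
        apply Real.log_le_log (Real.exp_pos α)
        linarith

lemma ratio_mono (α : ℝ) (hα : 0 < α) :
    MonotoneOn (fun z : ℝ => z / Real.log (Real.exp α + z / 2) ^ α) (Set.Ici 0) := by
  have hwpos : ∀ z : ℝ, 0 ≤ z → 0 < Real.log (Real.exp α + z / 2) :=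
    fun z hz => lt_of_lt_of_le hα (w_ge α hz)
  have hder : ∀ z : ℝ, 0 < z → HasDerivAt (fun z : ℝ => z / Real.log (Real.exp α + z / 2) ^ α)
      ((1 * (Real.log (Real.exp α + z / 2) ^ α) -
        z * (α * Real.log (Real.exp α + z / 2) ^ (α - 1) * ((1/2) / (Real.exp α + z / 2)))) /
        (Real.log (Real.exp α + z / 2) ^ α) ^ 2) z := by
    intro z hz0
    have hargpos : 0 < Real.exp α + z / 2 := by
      have := Real.exp_pos α; linarith
    have hw : 0 < Real.log (Real.exp α + z / 2) := hwpos z hz0.le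
    have hd1 : HasDerivAt (fun z : ℝ => Real.exp α + z / 2) (1 / 2) z := by
      simpa using ((hasDerivAt_id z).div_const 2).const_add (Real.exp α)
    have hd2 : HasDerivAt (fun z : ℝ => Real.log (Real.exp α + z / 2))
        ((1/2) / (Real.exp α + z / 2)) z := by
      simpa using (hd1.log hargpos.ne')
    have hd3 : HasDerivAt (fun z : ℝ => Real.log (Real.exp α + z / 2) ^ α)
        (α * Real.log (Real.exp α + z / 2) ^ (α - 1) * ((1/2) / (Real.exp α + z / 2))) z := by
      have := (Real.hasDerivAt_rpow_const (x := Real.log (Real.exp α + z / 2)) (p := α)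
        (Or.inl hw.ne')).comp z hd2
      simpa [Function.comp_def, mul_comm] using this
    exact (hasDerivAt_id z).div hd3 (Real.rpow_pos_of_pos hw α).ne'
  have hcont : ContinuousOn (fun z : ℝ => z / Real.log (Real.exp α + z / 2) ^ α) (Set.Ici 0) := by
    apply ContinuousOn.div continuousOn_id
    · apply ContinuousOn.rpow_const
      · apply ContinuousOn.log
        · fun_prop
        · intro z hz
          have := Real.exp_pos α; simp only [Set.mem_Ici] at hz; positivity
      · intro z hz; left; exact (hwpos z hz).ne'
    · intro z hz
      exact (Real.rpow_pos_of_pos (hwpos z hz) α).ne'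
  apply monotoneOn_of_deriv_nonneg (convex_Ici 0) hcont
  · intro z hz
    rw [interior_Ici] at hz
    exact (hder z hz).differentiableAt.differentiableWithinAt
  · intro z hz
    rw [interior_Ici] at hz
    have hz0 : (0:ℝ) < z := hz
    have hargpos : 0 < Real.exp α + z / 2 := by
      have := Real.exp_pos α; linarith
    have hw : 0 < Real.log (Real.exp α + z / 2) := hwpos z hz0.le
    rw [(hder z hz0).deriv]
    set w := Real.log (Real.exp α + z / 2) with hwdef
    apply div_nonneg _ (sq_nonneg _)
    rw [one_mul, sub_nonneg]
    have key : z * (α * ((1/2) / (Real.exp α + z / 2))) ≤ w := by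
      have h1 : z * (α * ((1/2) / (Real.exp α + z / 2))) = α * (z / (2 * (Real.exp α + z / 2))) := by
        field_simp
      rw [h1]
      have h2 : z / (2 * (Real.exp α + z / 2)) ≤ 1 := by
        rw [div_le_one (by positivity)]
        have := Real.exp_pos α
        linarith
      calc α * (z / (2 * (Real.exp α + z / 2))) ≤ α * 1 :=
            mul_le_mul_of_nonneg_left h2 hα.le
        _ = α := mul_one α
        _ ≤ w := w_ge α hz0.le
    calc z * (α * w ^ (α - 1) * ((1/2) / (Real.exp α + z / 2)))
        = (z * (α * ((1/2) / (Real.exp α + z / 2)))) * w ^ (α - 1) := by ring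
      _ ≤ w * w ^ (α - 1) :=
          mul_le_mul_of_nonneg_right key (Real.rpow_nonneg hw.le _)
      _ = w ^ α := by
          rw [show w * w ^ (α - 1) = w ^ (1:ℝ) * w ^ (α - 1) by rw [Real.rpow_one],
            ← Real.rpow_add hw]
          norm_num

lemma key_pointwise (α : ℝ) (hα : 0 < α) {h : ℝ} (hh : 0 < h) (z : ℝ) :
    min 2 (h * |z|) * Real.log (Real.exp α + 1 / h) ^ α
      ≤ 2 * Real.log (Real.exp α + |z| / 2) ^ α := by
  have hL : 0 < Real.log (Real.exp α + 1 / h) := by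
    have h2 : Real.log (Real.exp α + (2/h) / 2) = Real.log (Real.exp α + 1/h) := by ring_nf
    rw [← h2]
    exact lt_of_lt_of_le hα (w_ge α (by positivity))
  have hw : 0 < Real.log (Real.exp α + |z| / 2) :=
    lt_of_lt_of_le hα (w_ge α (abs_nonneg z))
  rcases le_or_gt (2 / h) |z| with hc | hc
  · have hLw : Real.log (Real.exp α + 1 / h) ≤ Real.log (Real.exp α + |z| / 2) := by
      apply Real.log_le_log (by positivity)
      have h2h : 2 / h = 2 * (1 / h) := by ring
      rw [h2h] at hc
      linarith
    exact mul_le_mul (min_le_left _ _) (Real.rpow_le_rpow hL.le hLw hα.le)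
      (Real.rpow_nonneg hL.le α) two_pos.le
  · have hmem1 : |z| ∈ Set.Ici (0:ℝ) := abs_nonneg z
    have hmem2 : (2/h) ∈ Set.Ici (0:ℝ) := by
      simp only [Set.mem_Ici]; positivity
    have hmono := ratio_mono α hα hmem1 hmem2 hc.le
    simp only at hmono
    have h2 : Real.log (Real.exp α + (2/h) / 2) = Real.log (Real.exp α + 1/h) := by ring_nf
    rw [h2] at hmono
    have hwa : 0 < Real.log (Real.exp α + |z| / 2) ^ α := Real.rpow_pos_of_pos hw α
    have hLa : 0 < Real.log (Real.exp α + 1 / h) ^ α := Real.rpow_pos_of_pos hL α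
    rw [div_le_div_iff₀ hwa hLa] at hmono
    calc min 2 (h * |z|) * Real.log (Real.exp α + 1 / h) ^ α
        ≤ (h * |z|) * Real.log (Real.exp α + 1 / h) ^ α := by
          apply mul_le_mul_of_nonneg_right (min_le_right _ _) hLa.le
      _ = h * (|z| * Real.log (Real.exp α + 1 / h) ^ α) := by ring
      _ ≤ h * (2 / h * Real.log (Real.exp α + |z| / 2) ^ α) := by
          apply mul_le_mul_of_nonneg_left hmono hh.le
      _ = 2 * Real.log (Real.exp α + |z| / 2) ^ α := by
          field_simp

lemma h_mul_L_le (α : ℝ) (hα : 0 < α) {h : ℝ} (hh : 0 < h) :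
    h * Real.log (Real.exp α + 1 / h) ^ α
      ≤ max 1 h * Real.log (Real.exp α + 1) ^ α := by
  have hk := key_pointwise α hα hh 2
  rw [show |(2:ℝ)| = 2 by norm_num, show (2:ℝ)/2 = 1 by norm_num] at hk
  have hL : (0:ℝ) ≤ Real.log (Real.exp α + 1 / h) ^ α := by
    have h2 : Real.log (Real.exp α + (2/h) / 2) = Real.log (Real.exp α + 1/h) := by ring_nf
    have := lt_of_lt_of_le hα (w_ge α (z := 2/h) (by positivity))
    rw [h2] at this
    exact (Real.rpow_pos_of_pos this α).le
  rcases le_or_gt h 1 with h1 | h1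
  · have : min 2 (h * 2) = h * 2 := min_eq_right (by linarith)
    rw [this] at hk
    calc h * Real.log (Real.exp α + 1 / h) ^ α
        ≤ Real.log (Real.exp α + 1) ^ α := by linarith
      _ ≤ max 1 h * Real.log (Real.exp α + 1) ^ α := by
          have : (0:ℝ) ≤ Real.log (Real.exp α + 1) ^ α := by
            apply Real.rpow_nonneg
            apply Real.log_nonneg
            have := Real.exp_pos α; linarith
          nlinarith [le_max_left (1:ℝ) h]
  · have : min 2 (h * 2) = 2 := min_eq_left (by linarith)
    rw [this] at hk
    have h3 : Real.log (Real.exp α + 1 / h) ^ α ≤ Real.log (Real.exp α + 1) ^ α := by linarith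
    calc h * Real.log (Real.exp α + 1 / h) ^ α
        ≤ h * Real.log (Real.exp α + 1) ^ α := mul_le_mul_of_nonneg_left h3 (by linarith)
      _ ≤ max 1 h * Real.log (Real.exp α + 1) ^ α := by
          apply mul_le_mul_of_nonneg_right (le_max_right 1 h)
          apply Real.rpow_nonneg
          apply Real.log_nonneg
          have := Real.exp_pos α; linarith

noncomputable def Fker (f : ℝ → ℂ) (u : ℝ) : ℂ :=
  ∫ z : ℝ, Complex.exp (Complex.I * u * z) * f z

lemma Fker_eq_fourier (f : ℝ → ℂ) (u : ℝ) :
    Fker f u = FourierTransform.fourier f (-u / (2 * Real.pi)) := by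
  rw [Real.fourier_real_eq_integral_exp_smul, Fker]
  congr 1
  ext z
  rw [smul_eq_mul]
  congr 1
  have hπ : (Real.pi : ℂ) ≠ 0 := by exact_mod_cast Real.pi_ne_zero
  congr 1
  push_cast
  field_simp

lemma Fker_deriv (f : ℝ → ℂ) (hf : Integrable f) (h'f : Differentiable ℝ f)
    (hf' : Integrable (deriv f)) (u : ℝ) :
    Fker (deriv f) u = (-Complex.I * u) * Fker f u := by
  rw [Fker_eq_fourier, Fker_eq_fourier, Real.fourier_deriv hf h'f hf']
  simp only [smul_eq_mul]
  congr 1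
  have hπ : (Real.pi : ℂ) ≠ 0 := by exact_mod_cast Real.pi_ne_zero
  push_cast
  field_simp

lemma exp_norm_one (u z : ℝ) : ‖Complex.exp (Complex.I * u * z)‖ = 1 := by
  rw [show Complex.I * (u:ℂ) * (z:ℂ) = ((u * z : ℝ) : ℂ) * Complex.I by push_cast; ring]
  rw [Complex.norm_exp_ofReal_mul_I]

lemma exp_diff_norm (u v z : ℝ) :
    ‖Complex.exp (Complex.I * u * z) - Complex.exp (Complex.I * v * z)‖
      ≤ min 2 (|u - v| * |z|) := by
  apply le_min
  · calc ‖Complex.exp (Complex.I * u * z) - Complex.exp (Complex.I * v * z)‖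
        ≤ ‖Complex.exp (Complex.I * u * z)‖ + ‖Complex.exp (Complex.I * v * z)‖ :=
        norm_sub_le _ _
      _ = 2 := by rw [exp_norm_one, exp_norm_one]; norm_num
  · have hfac : Complex.exp (Complex.I * u * z) - Complex.exp (Complex.I * v * z)
        = Complex.exp (Complex.I * v * z) * (Complex.exp (((u - v) * z : ℝ) * Complex.I) - 1) := by
      rw [mul_sub, ← Complex.exp_add, mul_one]
      push_cast
      ring_nf
    rw [hfac, norm_mul, exp_norm_one, one_mul]
    calc ‖Complex.exp (((u - v) * z : ℝ) * Complex.I) - 1‖ ≤ |(u - v) * z| :=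
        exp_I_sub_one_norm _
      _ = |u - v| * |z| := abs_mul _ _

lemma integrable_exp_mul {f : ℝ → ℂ} (hf : Integrable f) (u : ℝ) :
    Integrable (fun z : ℝ => Complex.exp (Complex.I * u * z) * f z) := by
  apply hf.bdd_mul (c := 1)
  · apply Continuous.aestronglyMeasurable
    fun_prop
  · exact Filter.Eventually.of_forall fun z => le_of_eq (exp_norm_one u z)

lemma Fker_sub_le (α : ℝ) (hα : 0 < α) {f : ℝ → ℂ} (hfc : Continuous f)
    (hf : Integrable f)
    (hW : Integrable (fun z : ℝ => Real.log (Real.exp α + |z| / 2) ^ α * ‖f z‖))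
    {u v : ℝ} (huv : u ≠ v) :
    ‖Fker f u - Fker f v‖
      ≤ (2 * ∫ z : ℝ, Real.log (Real.exp α + |z| / 2) ^ α * ‖f z‖) /
          Real.log (Real.exp α + 1 / |u - v|) ^ α := by
  have hh : 0 < |u - v| := abs_pos.mpr (sub_ne_zero.mpr huv)
  have hL : 0 < Real.log (Real.exp α + 1 / |u - v|) := by
    have h2 : Real.log (Real.exp α + (2/|u-v|) / 2) = Real.log (Real.exp α + 1/|u-v|) := by
      ring_nf
    rw [← h2]
    exact lt_of_lt_of_le hα (w_ge α (by positivity))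
  have hLa : 0 < Real.log (Real.exp α + 1 / |u - v|) ^ α := Real.rpow_pos_of_pos hL α
  rw [Fker, Fker, ← integral_sub (integrable_exp_mul hf u) (integrable_exp_mul hf v)]
  simp_rw [← sub_mul]
  have hmin_int : Integrable (fun z : ℝ => min 2 (|u - v| * |z|) * ‖f z‖) := by
    apply Integrable.mono' (hf.norm.const_mul 2)
    · apply Continuous.aestronglyMeasurable
      fun_prop
    · filter_upwards with z
      rw [Real.norm_eq_abs, abs_of_nonneg (by positivity : (0:ℝ) ≤ min 2 (|u - v| * |z|) * ‖f z‖)]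
      apply mul_le_mul_of_nonneg_right (min_le_left _ _) (norm_nonneg _)
  calc ‖∫ z : ℝ, (Complex.exp (Complex.I * u * z) - Complex.exp (Complex.I * v * z)) * f z‖
      ≤ ∫ z : ℝ, min 2 (|u - v| * |z|) * ‖f z‖ := by
        apply norm_integral_le_of_norm_le hmin_int
        filter_upwards with z
        rw [norm_mul]
        exact mul_le_mul_of_nonneg_right (exp_diff_norm u v z) (norm_nonneg _)
    _ ≤ ∫ z : ℝ, (2 / Real.log (Real.exp α + 1 / |u - v|) ^ α) *
          (Real.log (Real.exp α + |z| / 2) ^ α * ‖f z‖) := by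
        apply integral_mono hmin_int (hW.const_mul _)
        intro z
        have hk := key_pointwise α hα hh z
        dsimp only
        rw [div_mul_eq_mul_div, le_div_iff₀ hLa]
        calc min 2 (|u - v| * |z|) * ‖f z‖ * Real.log (Real.exp α + 1 / |u - v|) ^ α
            = (min 2 (|u - v| * |z|) * Real.log (Real.exp α + 1 / |u - v|) ^ α) * ‖f z‖ := by
              ring
          _ ≤ (2 * Real.log (Real.exp α + |z| / 2) ^ α) * ‖f z‖ :=
              mul_le_mul_of_nonneg_right hk (norm_nonneg _)
          _ = 2 * (Real.log (Real.exp α + |z| / 2) ^ α * ‖f z‖) := by ring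
    _ = (2 * ∫ z : ℝ, Real.log (Real.exp α + |z| / 2) ^ α * ‖f z‖) /
          Real.log (Real.exp α + 1 / |u - v|) ^ α := by
        rw [integral_const_mul]
        ring

lemma integrable_of_wlog (α : ℝ) (hα : 0 < α) {G : ℝ → ℂ} (hc : Continuous G)
    (hW : Integrable (fun z : ℝ => Real.log (Real.exp α + |z| / 2) ^ α * ‖G z‖)) :
    Integrable G := by
  have haa : (0:ℝ) < α ^ α := Real.rpow_pos_of_pos hα α
  apply Integrable.mono' (hW.const_mul (α ^ α)⁻¹) hc.aestronglyMeasurable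
  filter_upwards with z
  have hwz : α ^ α ≤ Real.log (Real.exp α + |z| / 2) ^ α :=
    Real.rpow_le_rpow hα.le (w_ge α (abs_nonneg z)) hα.le
  rw [inv_mul_eq_div, le_div_iff₀ haa]
  calc ‖G z‖ * α ^ α ≤ ‖G z‖ * Real.log (Real.exp α + |z| / 2) ^ α :=
      mul_le_mul_of_nonneg_left hwz (norm_nonneg _)
    _ = Real.log (Real.exp α + |z| / 2) ^ α * ‖G z‖ := mul_comm _ _

end Aux

set_option maxHeartbeats 2000000

/-- Key step of Lemma 6.2: for `φ(t) = (1/2π)∫ e^{itz} g(z) dz` with `g` twice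
continuously differentiable, vanishing together with `g'` at `±∞`, and having
logarithmically weighted integrable derivatives up to order two, the translates
`φ_{0k}(t) = φ(t−k)` satisfy, for `k ≠ 0` and `t,s ∈ [0,T]`, `t ≠ s`,
`|φ_{0k}(t) − φ_{0k}(s)| ≤ B/(k² ln^α(e^α + 1/|t−s|))`. -/
theorem translate_modulus_quadratic_decay
    (α T : ℝ) (hα : 0 < α) (hT : 0 < T)
    (g : ℝ → ℂ) (hg : ContDiff ℝ 2 g)
    (hgtop : Tendsto g atTop (nhds 0)) (hgbot : Tendsto g atBot (nhds 0))
    (hg'top : Tendsto (deriv g) atTop (nhds 0))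
    (hg'bot : Tendsto (deriv g) atBot (nhds 0))
    (hg'int : Integrable (deriv g))
    (hlog : ∀ i : ℕ, i ≤ 2 →
      Integrable (fun z : ℝ =>
        Real.log (Real.exp α + |z| / 2) ^ α * ‖iteratedDeriv i g z‖))
    (φ : ℝ → ℂ)
    (hφ : ∀ t : ℝ, φ t =
      (1 / (2 * (Real.pi : ℂ))) * ∫ z : ℝ, Complex.exp (Complex.I * t * z) * g z) :
    ∃ B > (0 : ℝ), ∀ k : ℤ, k ≠ 0 →
      ∀ t ∈ Set.Icc (0 : ℝ) T, ∀ s ∈ Set.Icc (0 : ℝ) T, t ≠ s →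
        ‖φ (t - (k : ℝ)) - φ (s - (k : ℝ))‖ ≤
          B / ((k : ℝ) ^ 2 * Real.log (Real.exp α + 1 / |t - s|) ^ α) := by
  -- smoothness facts
  have hg2 : ContDiff ℝ ((1:ℕ) + 1) g := by exact_mod_cast hg
  have hg1 : ContDiff ℝ 1 (deriv g) := by
    have := (contDiff_succ_iff_deriv).mp hg2
    exact this.2.2
  have hgdiff : Differentiable ℝ g := hg.differentiable (by norm_num)
  have hg'diff : Differentiable ℝ (deriv g) := hg1.differentiable one_ne_zero
  have hgc : Continuous g := hg.continuous
  have hg'c : Continuous (deriv g) := hg1.continuous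
  have hg''c : Continuous (deriv (deriv g)) := hg1.continuous_deriv le_rfl
  -- weighted integrability
  have hlog0 : Integrable (fun z : ℝ =>
      Real.log (Real.exp α + |z| / 2) ^ α * ‖g z‖) := by
    have := hlog 0 (by norm_num)
    simpa [iteratedDeriv_zero] using this
  have hlog2 : Integrable (fun z : ℝ =>
      Real.log (Real.exp α + |z| / 2) ^ α * ‖deriv (deriv g) z‖) := by
    have := hlog 2 le_rfl
    have h2 : iteratedDeriv 2 g = deriv (deriv g) := by
      rw [iteratedDeriv_succ, iteratedDeriv_one]
    rwa [h2] at this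
  have hg_int : Integrable g := integrable_of_wlog α hα hgc hlog0
  have hg''_int : Integrable (deriv (deriv g)) := integrable_of_wlog α hα hg''c hlog2
  -- Fourier relations
  have hF1 : ∀ u : ℝ, Fker (deriv g) u = (-Complex.I * u) * Fker g u :=
    Fker_deriv g hg_int hgdiff hg'int
  have hF2 : ∀ u : ℝ, Fker (deriv (deriv g)) u = -(u:ℂ)^2 * Fker g u := by
    intro u
    rw [Fker_deriv (deriv g) hg'int hg'diff hg''_int u, hF1 u]
    have := Complex.I_sq
    ring_nf
    rw [Complex.I_sq]
    ring
  -- constants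
  obtain ⟨W0, hW0def⟩ : ∃ W0 : ℝ, W0 = ∫ z : ℝ, Real.log (Real.exp α + |z| / 2) ^ α * ‖g z‖ :=
    ⟨_, rfl⟩
  obtain ⟨W2, hW2def⟩ :
      ∃ W2 : ℝ, W2 = ∫ z : ℝ, Real.log (Real.exp α + |z| / 2) ^ α * ‖deriv (deriv g) z‖ :=
    ⟨_, rfl⟩
  obtain ⟨M2, hM2def⟩ : ∃ M2 : ℝ, M2 = ∫ z : ℝ, ‖deriv (deriv g) z‖ := ⟨_, rfl⟩
  obtain ⟨K, hKdef⟩ : ∃ K : ℝ, K = Real.log (Real.exp α + 1) ^ α := ⟨_, rfl⟩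
  have hlogz : ∀ z : ℝ, (0:ℝ) ≤ Real.log (Real.exp α + |z| / 2) ^ α := fun z => by
    apply Real.rpow_nonneg
    apply Real.log_nonneg
    have h1 := Real.add_one_le_exp α
    have h2 := abs_nonneg z
    linarith
  have hW0 : 0 ≤ W0 := hW0def ▸ integral_nonneg fun z => mul_nonneg (hlogz z) (norm_nonneg _)
  have hW2 : 0 ≤ W2 := hW2def ▸ integral_nonneg fun z => mul_nonneg (hlogz z) (norm_nonneg _)
  have hM2 : 0 ≤ M2 := hM2def ▸ integral_nonneg fun z => norm_nonneg _
  have hK : 0 ≤ K := by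
    rw [hKdef]
    apply Real.rpow_nonneg
    apply Real.log_nonneg
    have := Real.exp_pos α; linarith
  have hmax : (0:ℝ) ≤ max 1 T := le_trans zero_le_one (le_max_left _ _)
  have hB1 : (0:ℝ) ≤ 2*W0*(T+1)^2 :=
    mul_nonneg (mul_nonneg (by norm_num) hW0) (by positivity)
  have hB2 : (0:ℝ) ≤ 2*W2*(T+1)^2 :=
    mul_nonneg (mul_nonneg (by norm_num) hW2) (by positivity)
  have hB3 : (0:ℝ) ≤ 4*M2*(T+1)^4*(max 1 T)*K :=
    mul_nonneg (mul_nonneg (mul_nonneg (mul_nonneg (by norm_num) hM2) (by positivity)) hmax) hK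
  refine ⟨1 + 2*W0*(T+1)^2 + 2*W2*(T+1)^2 + 4*M2*(T+1)^4*(max 1 T)*K, by linarith, ?_⟩
  intro k hk t ht s hs hts
  set u : ℝ := t - (k:ℝ) with hudef
  set v : ℝ := s - (k:ℝ) with hvdef
  have huv : u - v = t - s := by rw [hudef, hvdef]; ring
  have huvne : u ≠ v := by
    intro h; apply hts
    have : u - v = 0 := by rw [h]; ring
    rw [huv] at this; linarith [sub_eq_zero.mp this]
  have hh : 0 < |t - s| := abs_pos.mpr (sub_ne_zero.mpr hts)
  set L : ℝ := Real.log (Real.exp α + 1 / |t - s|) with hLdef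
  have hLpos : 0 < L := by
    rw [hLdef]
    apply Real.log_pos
    have h1 : 1 < Real.exp α := by
      rw [show (1:ℝ) = Real.exp 0 by rw [Real.exp_zero]]
      exact Real.exp_lt_exp.mpr hα
    have : 0 < 1 / |t - s| := by positivity
    linarith
  have hLa : 0 < L ^ α := Real.rpow_pos_of_pos hLpos α
  have hk1 : (1:ℝ) ≤ |(k:ℝ)| := by
    have : (1:ℤ) ≤ |k| := Int.one_le_abs hk
    exact_mod_cast (by exact_mod_cast this : (1:ℝ) ≤ ((|k| : ℤ) : ℝ))
  have hk2 : (1:ℝ) ≤ (k:ℝ)^2 := by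
    rw [← sq_abs, sq]
    calc (1:ℝ) = 1 * 1 := by norm_num
      _ ≤ |(k:ℝ)| * |(k:ℝ)| := mul_le_mul hk1 hk1 zero_le_one (le_trans zero_le_one hk1)
  have hD : 0 < (k:ℝ)^2 * L ^ α := by positivity
  rw [le_div_iff₀ hD]
  -- φ in terms of Fker
  have hφF : ∀ r : ℝ, φ r = (1 / (2 * (Real.pi : ℂ))) * Fker g r := fun r => hφ r
  have hcnorm : ‖(1 / (2 * (Real.pi : ℂ)))‖ ≤ 1 := by
    rw [norm_div, norm_one]
    rw [div_le_one (by
      have : (0:ℝ) < 2 * Real.pi := by positivity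
      calc (0:ℝ) < 2 * Real.pi := this
        _ = ‖(2 * (Real.pi:ℝ) : ℝ)‖ := by
            rw [Real.norm_eq_abs, abs_of_pos this]
        _ = ‖(2 * (Real.pi : ℂ))‖ := by
            rw [show (2 * (Real.pi : ℂ)) = ((2 * Real.pi : ℝ) : ℂ) by push_cast; ring,
              Complex.norm_real, Real.norm_eq_abs])]
    calc (1:ℝ) ≤ 2 * Real.pi := by linarith [Real.pi_gt_three]
      _ = ‖(2 * (Real.pi : ℂ))‖ := by
          rw [show (2 * (Real.pi : ℂ)) = ((2 * Real.pi : ℝ) : ℂ) by push_cast; ring,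
            Complex.norm_real, Real.norm_eq_abs, abs_of_pos (by positivity)]
  have hφnorm : ‖φ u - φ v‖ ≤ ‖Fker g u - Fker g v‖ := by
    rw [hφF u, hφF v, ← mul_sub, norm_mul]
    calc ‖(1 / (2 * (Real.pi : ℂ)))‖ * ‖Fker g u - Fker g v‖
        ≤ 1 * ‖Fker g u - Fker g v‖ :=
          mul_le_mul_of_nonneg_right hcnorm (norm_nonneg _)
      _ = ‖Fker g u - Fker g v‖ := one_mul _
  -- level-0 bound
  have hbound0 : ‖Fker g u - Fker g v‖ ≤ 2 * W0 / L ^ α := by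
    have := Fker_sub_le α hα hgc hg_int hlog0 huvne
    rwa [huv, ← hW0def, ← hLdef] at this
  have habs_ts : |t - s| ≤ T := by
    rw [abs_le]
    constructor <;> [linarith [ht.1, ht.2, hs.1, hs.2]; linarith [ht.1, ht.2, hs.1, hs.2]]
  rcases le_or_gt |(k:ℝ)| (T + 1) with hcase | hcase
  · -- small k
    have hknorm : (k:ℝ)^2 ≤ (T+1)^2 := by
      rw [← sq_abs, sq, sq]
      exact mul_le_mul hcase hcase (abs_nonneg _) (by linarith)
    calc ‖φ u - φ v‖ * ((k:ℝ)^2 * L ^ α)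
        ≤ (2 * W0 / L ^ α) * ((k:ℝ)^2 * L ^ α) := by
          apply mul_le_mul_of_nonneg_right (le_trans hφnorm hbound0) hD.le
      _ = 2 * W0 * (k:ℝ)^2 := by
          have he : (2 * W0 / L ^ α) * ((k:ℝ)^2 * L ^ α)
              = 2 * W0 * (k:ℝ)^2 * (L ^ α / L ^ α) := by ring
          rw [he, div_self hLa.ne', mul_one]
      _ ≤ 2 * W0 * (T+1)^2 :=
          mul_le_mul_of_nonneg_left hknorm (by linarith)
      _ ≤ 1 + 2*W0*(T+1)^2 + 2*W2*(T+1)^2 + 4*M2*(T+1)^4*(max 1 T)*K := by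
          linarith
  · -- large k
    have hTk : T + 1 ≤ |(k:ℝ)| := hcase.le
    have hu_lb : |(k:ℝ)| - T ≤ |u| := by
      have : |(k:ℝ)| - |t| ≤ |t - (k:ℝ)| := by
        have := abs_sub_abs_le_abs_sub (k:ℝ) t
        rw [abs_sub_comm] at this
        linarith
      have htle : |t| ≤ T := by
        rw [abs_le]; exact ⟨by linarith [ht.1], ht.2⟩
      rw [hudef]; linarith
    have hv_lb : |(k:ℝ)| - T ≤ |v| := by
      have : |(k:ℝ)| - |s| ≤ |s - (k:ℝ)| := by
        have := abs_sub_abs_le_abs_sub (k:ℝ) s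
        rw [abs_sub_comm] at this
        linarith
      have hsle : |s| ≤ T := by
        rw [abs_le]; exact ⟨by linarith [hs.1], hs.2⟩
      rw [hvdef]; linarith
    have hTT : T*(T+1) ≤ T*|(k:ℝ)| := mul_le_mul_of_nonneg_left hTk hT.le
    have hu_lb2 : |(k:ℝ)| / (T+1) ≤ |u| := by
      have : |(k:ℝ)| / (T+1) ≤ |(k:ℝ)| - T := by
        rw [div_le_iff₀ (by linarith)]
        ring_nf
        ring_nf at hTT
        linarith
      linarith
    have hv_lb2 : |(k:ℝ)| / (T+1) ≤ |v| := by
      have : |(k:ℝ)| / (T+1) ≤ |(k:ℝ)| - T := by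
        rw [div_le_iff₀ (by linarith)]
        ring_nf
        ring_nf at hTT
        linarith
      linarith
    have hkabs : (0:ℝ) < |(k:ℝ)| := by linarith
    have hT1 : (0:ℝ) < T + 1 := by linarith
    have hupos : 0 < |u| := lt_of_lt_of_le (div_pos hkabs hT1) hu_lb2
    have hvpos : 0 < |v| := lt_of_lt_of_le (div_pos hkabs hT1) hv_lb2
    have hune : u ≠ 0 := fun h => by rw [h] at hupos; simp at hupos
    have hvne : v ≠ 0 := fun h => by rw [h] at hvpos; simp at hvpos
    have huC : ((u:ℝ):ℂ)^2 ≠ 0 := by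
      apply pow_ne_zero
      exact_mod_cast hune
    have hvC : ((v:ℝ):ℂ)^2 ≠ 0 := by
      apply pow_ne_zero
      exact_mod_cast hvne
    have hu_ub : |u| ≤ 2 * |(k:ℝ)| := by
      have : |u| ≤ |t| + |(k:ℝ)| := by
        rw [hudef]; exact (abs_sub t (k:ℝ))
      have htle : |t| ≤ T := by rw [abs_le]; exact ⟨by linarith [ht.1], ht.2⟩
      linarith
    have hv_ub : |v| ≤ 2 * |(k:ℝ)| := by
      have : |v| ≤ |s| + |(k:ℝ)| := by
        rw [hvdef]; exact (abs_sub s (k:ℝ))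
      have hsle : |s| ≤ T := by rw [abs_le]; exact ⟨by linarith [hs.1], hs.2⟩
      linarith
    -- decomposition
    have e0u : Fker g u = -(Fker (deriv (deriv g)) u) / ((u:ℝ):ℂ)^2 := by
      rw [hF2 u, neg_mul, neg_neg, mul_div_cancel_left₀ _ huC]
    have e0v : Fker g v = -(Fker (deriv (deriv g)) v) / ((v:ℝ):ℂ)^2 := by
      rw [hF2 v, neg_mul, neg_neg, mul_div_cancel_left₀ _ hvC]
    set A : ℂ := Fker (deriv (deriv g)) u with hAdef
    set Bc : ℂ := Fker (deriv (deriv g)) v with hBdef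
    have hdecomp : Fker g u - Fker g v
        = -((A - Bc)/((u:ℝ):ℂ)^2 + Bc * (1/((u:ℝ):ℂ)^2 - 1/((v:ℝ):ℂ)^2)) := by
      rw [e0u, e0v]
      field_simp
      ring
    -- norm bounds
    have hABn : ‖A - Bc‖ ≤ 2 * W2 / L ^ α := by
      have := Fker_sub_le α hα hg''c hg''_int hlog2 huvne
      rwa [huv, ← hW2def, ← hLdef, ← hAdef, ← hBdef] at this
    have hBn : ‖Bc‖ ≤ M2 := by
      rw [hBdef, Fker]
      calc ‖∫ z : ℝ, Complex.exp (Complex.I * v * z) * deriv (deriv g) z‖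
          ≤ ∫ z : ℝ, ‖Complex.exp (Complex.I * v * z) * deriv (deriv g) z‖ :=
            norm_integral_le_integral_norm _
        _ = M2 := by
            rw [hM2def]
            congr 1
            ext z
            rw [norm_mul, exp_norm_one, one_mul]
    have hterm1 : ‖(A - Bc)/((u:ℝ):ℂ)^2‖ = ‖A - Bc‖ / u^2 := by
      rw [norm_div, norm_pow, Complex.norm_real, Real.norm_eq_abs, sq_abs]
    have hterm2 : ‖Bc * (1/((u:ℝ):ℂ)^2 - 1/((v:ℝ):ℂ)^2)‖ = ‖Bc‖ * |1/u^2 - 1/v^2| := by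
      rw [norm_mul]
      congr 1
      rw [show (1/((u:ℝ):ℂ)^2 - 1/((v:ℝ):ℂ)^2) = ((1/u^2 - 1/v^2 : ℝ) : ℂ) by push_cast; ring,
        Complex.norm_real, Real.norm_eq_abs]
    -- real estimates
    have hu2 : (k:ℝ)^2 / (T+1)^2 ≤ u^2 := by
      rw [← sq_abs u, ← sq_abs (k:ℝ)]
      rw [div_le_iff₀ (by positivity)]
      calc |(k:ℝ)|^2 = (|(k:ℝ)|/(T+1))^2 * (T+1)^2 := by field_simp
        _ ≤ |u|^2 * (T+1)^2 := by
            apply mul_le_mul_of_nonneg_right _ (by positivity)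
            apply pow_le_pow_left₀ (by positivity) hu_lb2
    have hv2 : (k:ℝ)^2 / (T+1)^2 ≤ v^2 := by
      rw [← sq_abs v, ← sq_abs (k:ℝ)]
      rw [div_le_iff₀ (by positivity)]
      calc |(k:ℝ)|^2 = (|(k:ℝ)|/(T+1))^2 * (T+1)^2 := by field_simp
        _ ≤ |v|^2 * (T+1)^2 := by
            apply mul_le_mul_of_nonneg_right _ (by positivity)
            apply pow_le_pow_left₀ (by positivity) hv_lb2
    have hu2pos : 0 < u^2 := by positivity
    have hv2pos : 0 < v^2 := by positivity
    have hinvu : 1/u^2 ≤ (T+1)^2/(k:ℝ)^2 := by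
      rw [div_le_div_iff₀ hu2pos (by positivity)]
      have := hu2
      rw [div_le_iff₀ (by positivity : (0:ℝ) < (T+1)^2)] at this
      linarith
    have hdiff_inv : |1/u^2 - 1/v^2| ≤ 4 * |t-s| * (T+1)^4 / (k:ℝ)^2 := by
      have hkk : |(k:ℝ)| ≤ (k:ℝ)^2 := by
        calc |(k:ℝ)| = |(k:ℝ)| * 1 := (mul_one _).symm
          _ ≤ |(k:ℝ)| * |(k:ℝ)| := mul_le_mul_of_nonneg_left hk1 (abs_nonneg _)
          _ = (k:ℝ)^2 := by rw [← sq_abs, sq]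
      have heq : 1/u^2 - 1/v^2 = (v^2 - u^2)/(u^2 * v^2) := by
        field_simp
      rw [heq, abs_div, abs_of_pos (mul_pos hu2pos hv2pos),
        div_le_iff₀ (mul_pos hu2pos hv2pos)]
      have h6 : |v^2 - u^2| ≤ 4 * |t-s| * (k:ℝ)^2 := by
        have e1 : v^2 - u^2 = (v - u) * (v + u) := by ring
        rw [e1, abs_mul]
        have h1 : |v - u| = |t - s| := by
          rw [show v - u = -(t - s) by rw [hudef, hvdef]; ring, abs_neg]
        have h2 : |v + u| ≤ 4 * |(k:ℝ)| := by
          calc |v + u| ≤ |v| + |u| := abs_add_le v u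
            _ ≤ 4 * |(k:ℝ)| := by linarith
        calc |v - u| * |v + u| ≤ |t - s| * (4 * |(k:ℝ)|) := by
              rw [h1]
              exact mul_le_mul_of_nonneg_left h2 (abs_nonneg _)
          _ ≤ |t - s| * (4 * (k:ℝ)^2) := by
              apply mul_le_mul_of_nonneg_left _ (abs_nonneg _)
              linarith
          _ = 4 * |t-s| * (k:ℝ)^2 := by ring
      have h7 : 4 * |t-s| * (k:ℝ)^2 ≤ 4 * |t-s| * (T+1)^4 / (k:ℝ)^2 * (u^2 * v^2) := by
        have hq : (0:ℝ) < (k:ℝ)^2/(T+1)^2 := div_pos (by linarith) (by positivity)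
        have hprod : (k:ℝ)^2/(T+1)^2 * ((k:ℝ)^2/(T+1)^2) ≤ u^2 * v^2 :=
          mul_le_mul hu2 hv2 hq.le hu2pos.le
        have hcoef : (0:ℝ) ≤ 4 * |t-s| * (T+1)^4 / (k:ℝ)^2 := by positivity
        have hkne : ((k:ℝ)) ≠ 0 := Int.cast_ne_zero.mpr hk
        have hT1ne : (T+1:ℝ) ≠ 0 := by linarith
        have hkey : 4 * |t-s| * (T+1)^4 / (k:ℝ)^2 * ((k:ℝ)^2/(T+1)^2 * ((k:ℝ)^2/(T+1)^2))
            = 4 * |t-s| * (k:ℝ)^2 := by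
          field_simp
        calc 4 * |t-s| * (k:ℝ)^2
            = 4 * |t-s| * (T+1)^4 / (k:ℝ)^2 * ((k:ℝ)^2/(T+1)^2 * ((k:ℝ)^2/(T+1)^2)) := hkey.symm
          _ ≤ 4 * |t-s| * (T+1)^4 / (k:ℝ)^2 * (u^2 * v^2) :=
              mul_le_mul_of_nonneg_left hprod hcoef
      linarith
    -- final assembly
    have hX : ‖φ u - φ v‖ ≤ (2 * W2 / L ^ α) * ((T+1)^2/(k:ℝ)^2)
        + M2 * (4 * |t-s| * (T+1)^4 / (k:ℝ)^2) := by
      calc ‖φ u - φ v‖ ≤ ‖Fker g u - Fker g v‖ := hφnorm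
        _ = ‖(A - Bc)/((u:ℝ):ℂ)^2 + Bc * (1/((u:ℝ):ℂ)^2 - 1/((v:ℝ):ℂ)^2)‖ := by
            rw [hdecomp, norm_neg]
        _ ≤ ‖(A - Bc)/((u:ℝ):ℂ)^2‖ + ‖Bc * (1/((u:ℝ):ℂ)^2 - 1/((v:ℝ):ℂ)^2)‖ :=
            norm_add_le _ _
        _ = ‖A - Bc‖ / u^2 + ‖Bc‖ * |1/u^2 - 1/v^2| := by rw [hterm1, hterm2]
        _ ≤ (2 * W2 / L ^ α) * ((T+1)^2/(k:ℝ)^2)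
            + M2 * (4 * |t-s| * (T+1)^4 / (k:ℝ)^2) := by
            apply add_le_add
            · calc ‖A - Bc‖ / u^2 = ‖A - Bc‖ * (1/u^2) := by ring
                _ ≤ (2 * W2 / L ^ α) * ((T+1)^2/(k:ℝ)^2) := by
                    apply mul_le_mul hABn hinvu (by positivity) (by positivity)
            · apply mul_le_mul hBn hdiff_inv (abs_nonneg _) hM2
    have hhL : |t-s| * L ^ α ≤ (max 1 T) * K := by
      have := h_mul_L_le α hα hh
      rw [← hLdef, ← hKdef] at this
      calc |t-s| * L ^ α ≤ max 1 |t-s| * K := this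
        _ ≤ max 1 T * K := by
            apply mul_le_mul_of_nonneg_right _ hK
            apply max_le_max le_rfl habs_ts
    calc ‖φ u - φ v‖ * ((k:ℝ)^2 * L ^ α)
        ≤ ((2 * W2 / L ^ α) * ((T+1)^2/(k:ℝ)^2)
            + M2 * (4 * |t-s| * (T+1)^4 / (k:ℝ)^2)) * ((k:ℝ)^2 * L ^ α) := by
          apply mul_le_mul_of_nonneg_right hX hD.le
      _ = 2 * W2 * (T+1)^2 + 4 * M2 * (T+1)^4 * (|t-s| * L ^ α) := by
          have hk2ne : ((k:ℝ)^2) ≠ 0 := by positivity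
          have he : ((2 * W2 / L ^ α) * ((T+1)^2/(k:ℝ)^2)
                + M2 * (4 * |t-s| * (T+1)^4 / (k:ℝ)^2)) * ((k:ℝ)^2 * L ^ α)
              = 2 * W2 * (T+1)^2 * (L ^ α / L ^ α) * ((k:ℝ)^2/(k:ℝ)^2)
                + 4 * M2 * (T+1)^4 * (|t-s| * L ^ α) * ((k:ℝ)^2/(k:ℝ)^2) := by ring
          rw [he, div_self hLa.ne', div_self hk2ne]
          ring
      _ ≤ 2 * W2 * (T+1)^2 + 4 * M2 * (T+1)^4 * ((max 1 T) * K) := by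
          apply add_le_add le_rfl
          apply mul_le_mul_of_nonneg_left hhL (by positivity)
      _ ≤ 1 + 2*W0*(T+1)^2 + 2*W2*(T+1)^2 + 4*M2*(T+1)^4*(max 1 T)*K := by
          have h1 : 4 * M2 * (T+1)^4 * ((max 1 T) * K) = 4*M2*(T+1)^4*(max 1 T)*K := by ring
          rw [h1]
          have : (0:ℝ) ≤ 2*W0*(T+1)^2 := by positivity
          linarith
end

section
/- Let C > 0, β > 1/2, and α > 0, and define σ(h) = C (ln(e^α + 1/h))^{−β} for h > 0. Then σ is strictly increasing on (0,∞) with σ(h) → 0 as h → 0+, its inverse on the range of σ is given by σ^{(−1)}(u) = 1/(exp((C/u)^{1/β}) − e^α), and there exists ε > 0 such that ∫_0^ε √(−ln(σ^{(−1)}(u))) du < ∞. -/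
open Filter

/-- Remark 3.1, first case: the logarithmic modulus
`σ(h) = C · (ln(e^α + 1/h))^(−β)` with `β > 1/2` is strictly increasing on `(0,∞)`,
tends to `0` at `0+`, has inverse `σ⁻¹(u) = 1/(exp((C/u)^(1/β)) − e^α)` on its range,
and satisfies the entropy-integral condition `∫₀^ε √(−ln σ⁻¹(u)) du < ∞`. -/
theorem log_modulus_entropy_condition (C β α : ℝ) (hC : 0 < C) (hβ : 1 / 2 < β)
    (hα : 0 < α) :
    StrictMonoOn (fun h : ℝ => C * Real.log (Real.exp α + 1 / h) ^ (-β)) (Set.Ioi 0) ∧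
    Tendsto (fun h : ℝ => C * Real.log (Real.exp α + 1 / h) ^ (-β))
      (nhdsWithin 0 (Set.Ioi 0)) (nhds 0) ∧
    (∀ h : ℝ, 0 < h →
      1 / (Real.exp ((C / (C * Real.log (Real.exp α + 1 / h) ^ (-β))) ^ (1 / β)) -
        Real.exp α) = h) ∧
    ∃ ε > (0 : ℝ), MeasureTheory.IntegrableOn
      (fun u : ℝ =>
        Real.sqrt (-Real.log (1 / (Real.exp ((C / u) ^ (1 / β)) - Real.exp α))))
      (Set.Ioc 0 ε) := by
  have hβ0 : 0 < β := by linarith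
  have hlogpos : ∀ h : ℝ, 0 < h → 0 < Real.log (Real.exp α + 1 / h) := by
    intro h hh
    have : (1 : ℝ) < Real.exp α + 1 / h := by
      have h1 : (1 : ℝ) < Real.exp α := by
        rw [show (1:ℝ) = Real.exp 0 by simp]; exact Real.exp_lt_exp.2 hα
      have h2 : 0 < 1 / h := by positivity
      linarith
    exact Real.log_pos this
  refine ⟨?_, ?_, ?_, ?_⟩
  · intro h1 h1m h2 h2m hlt
    simp only [Set.mem_Ioi] at h1m h2m
    have hL2 : 0 < Real.log (Real.exp α + 1 / h2) := hlogpos _ h2m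
    have hlt' : Real.log (Real.exp α + 1 / h2) < Real.log (Real.exp α + 1 / h1) := by
      apply Real.log_lt_log
      · positivity
      · have : 1 / h2 < 1 / h1 := by
          exact one_div_lt_one_div_of_lt h1m hlt
        linarith
    have := Real.rpow_lt_rpow_of_neg hL2 hlt' (neg_neg_of_pos hβ0)
    exact mul_lt_mul_of_pos_left this hC
  · have h1 : Tendsto (fun h : ℝ => Real.exp α + 1 / h) (nhdsWithin 0 (Set.Ioi 0)) atTop := by
      apply tendsto_atTop_add_const_left
      exact tendsto_inv_nhdsGT_zero.congr fun x => (one_div x).symm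
    have h2 : Tendsto (fun h : ℝ => Real.log (Real.exp α + 1 / h) ^ (-β))
        (nhdsWithin 0 (Set.Ioi 0)) (nhds 0) :=
      (tendsto_rpow_neg_atTop hβ0).comp (Real.tendsto_log_atTop.comp h1)
    simpa using h2.const_mul C
  · intro h hh
    have hL : 0 < Real.log (Real.exp α + 1 / h) := hlogpos _ hh
    set L := Real.log (Real.exp α + 1 / h) with hLdef
    have hne : L ^ (-β) ≠ 0 := by
      have := Real.rpow_pos_of_pos hL (-β); positivity
    have e1 : C / (C * L ^ (-β)) = L ^ β := by
      rw [div_mul_cancel_left₀ (ne_of_gt hC), Real.rpow_neg hL.le, inv_inv]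
    rw [e1, ← Real.rpow_mul hL.le, mul_one_div, div_self (ne_of_gt hβ0),
      Real.rpow_one, Real.exp_log (by positivity)]
    field_simp
    ring_nf
  · set ε := C / Real.log (Real.exp α + 1) ^ β with hεdef
    have hlog1 : 0 < Real.log (Real.exp α + 1) := by
      apply Real.log_pos
      have := Real.exp_pos α; linarith
    have hε : 0 < ε := by
      have := Real.rpow_pos_of_pos hlog1 β; positivity
    refine ⟨ε, hε, ?_⟩
    set g : ℝ → ℝ := fun u => C ^ (1 / (2 * β)) * u ^ (-(1 / (2 * β))) with hg
    have hgint : MeasureTheory.IntegrableOn g (Set.Ioc 0 ε) := by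
      apply MeasureTheory.Integrable.const_mul
      have : IntervalIntegrable (fun u : ℝ => u ^ (-(1 / (2 * β)))) MeasureTheory.volume 0 ε := by
        apply intervalIntegral.intervalIntegrable_rpow'
        rw [neg_lt_neg_iff]
        have h2β : 1 < 2 * β := by linarith
        rw [div_lt_one (by linarith)]; linarith
      rw [intervalIntegrable_iff_integrableOn_Ioc_of_le hε.le] at this
      exact this
    have key : ∀ u ∈ Set.Ioc (0:ℝ) ε, 1 ≤ Real.exp ((C / u) ^ (1 / β)) - Real.exp α := by
      rintro u ⟨hu0, huε⟩
      set A := (C / u) ^ (1 / β) with hA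
      have hCu : 0 < C / u := by positivity
      have hA1 : Real.log (Real.exp α + 1) ≤ A := by
        have h1 : Real.log (Real.exp α + 1) ^ β ≤ C / u := by
          rw [hεdef, le_div_iff₀ (Real.rpow_pos_of_pos hlog1 β)] at huε
          rw [le_div_iff₀ hu0]
          nlinarith [huε]
        calc Real.log (Real.exp α + 1) = (Real.log (Real.exp α + 1) ^ β) ^ (1 / β) := by
              rw [← Real.rpow_mul hlog1.le, mul_one_div, div_self (ne_of_gt hβ0),
                Real.rpow_one]
          _ ≤ A := Real.rpow_le_rpow (Real.rpow_pos_of_pos hlog1 β).le h1 (by positivity)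
      have hEA : Real.exp α + 1 ≤ Real.exp A := by
        calc Real.exp α + 1 = Real.exp (Real.log (Real.exp α + 1)) := by
              rw [Real.exp_log]; positivity
          _ ≤ Real.exp A := Real.exp_le_exp.2 hA1
      linarith
    apply MeasureTheory.Integrable.mono' hgint
    · apply ContinuousOn.aestronglyMeasurable _ measurableSet_Ioc
      intro u hu
      have hu0 : 0 < u := hu.1
      have hE := key u hu
      have hd : Real.exp ((C / u) ^ (1 / β)) - Real.exp α ≠ 0 := by linarith
      have h1 : ContinuousAt (fun u : ℝ => (C / u) ^ (1 / β)) u := by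
        apply ContinuousAt.rpow_const
        · exact continuousAt_const.div continuousAt_id (ne_of_gt hu0)
        · right; positivity
      apply ContinuousAt.continuousWithinAt
      apply Real.continuous_sqrt.continuousAt.comp
      apply ContinuousAt.neg
      apply ContinuousAt.comp (Real.continuousAt_log ?_) ?_
      · positivity
      · exact continuousAt_const.div (h1.rexp.sub continuousAt_const) hd
    · rw [MeasureTheory.ae_restrict_iff' measurableSet_Ioc]
      apply MeasureTheory.ae_of_all
      intro u hu
      obtain ⟨hu0, huε⟩ := hu
      set A := (C / u) ^ (1 / β) with hA
      have hCu : 0 < C / u := by positivity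
      have hEpos : 0 < Real.exp A - Real.exp α := by
        have := key u ⟨hu0, huε⟩; rw [← hA] at this; linarith
      have hlogle : -Real.log (1 / (Real.exp A - Real.exp α)) ≤ A := by
        rw [one_div, Real.log_inv, neg_neg]
        calc Real.log (Real.exp A - Real.exp α) ≤ Real.log (Real.exp A) :=
              Real.log_le_log hEpos (by linarith [Real.exp_pos α])
          _ = A := Real.log_exp A
      have hsq : Real.sqrt (-Real.log (1 / (Real.exp A - Real.exp α))) ≤ Real.sqrt A :=
        Real.sqrt_le_sqrt hlogle
      have hAs : Real.sqrt A = g u := by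
        rw [Real.sqrt_eq_rpow, hA, ← Real.rpow_mul hCu.le,
          show (1 / β) * (1 / 2) = 1 / (2 * β) by field_simp,
          Real.div_rpow hC.le hu0.le, div_eq_mul_inv, ← Real.rpow_neg hu0.le, hg]
      rw [Real.norm_eq_abs, abs_of_nonneg (Real.sqrt_nonneg _)]
      calc Real.sqrt (-Real.log (1 / (Real.exp A - Real.exp α))) ≤ Real.sqrt A := hsq
        _ = g u := hAs
end
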